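/- arXiv:2310.16952 — 2 statements merged into one kernel-verified Lean document; each statement's English description precedes it below -/
import Mathlib

section
/- Let m > 1 be an odd integer each of whose prime divisors p satisfies either (p ≡ 1 (mod 8) and −2 is a fourth power modulo p) or p ≡ 3 (mod 8). Then the congruence n⁴ + 2 ≡ 0 (mod m) has exactly 4^{ω₀(m)} · 2^{ω₁(m)} solutions n in ℤ/mℤ, where ω₀(m) is the number of distinct prime divisors of m of the first kind and ω₁(m) is the number of distinct prime divisors of m congruent to 3 modulo 8. If m has a prime divisor p with p ≡ 5 or 7 (mod 8), the congruence has no solutions. -/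
open scoped Classical

noncomputable def solCard (m : ℕ) : ℕ := Nat.card {x : ZMod m // x ^ 4 + 2 = 0}

lemma solCard_eq (m : ℕ) (hm : 0 < m) :
    ((Finset.range m).filter (fun n => (n ^ 4 + 2) % m = 0)).card = solCard m := by
  haveI : NeZero m := ⟨hm.ne'⟩
  rw [solCard, Nat.card_eq_fintype_card, Fintype.card_subtype]
  refine Finset.card_bij (fun n _ => ((n : ZMod m))) ?_ ?_ ?_
  · intro n hn
    simp only [Finset.mem_filter, Finset.mem_range] at hn
    simp only [Finset.mem_filter, Finset.mem_univ, true_and]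
    have h : ((n ^ 4 + 2 : ℕ) : ZMod m) = 0 := by
      rw [ZMod.natCast_eq_zero_iff]
      exact Nat.dvd_of_mod_eq_zero hn.2
    push_cast at h
    linear_combination h
  · intro a ha b hb hab
    simp only [Finset.mem_filter, Finset.mem_range] at ha hb
    have hab' : ((a : ZMod m)) = (b : ZMod m) := hab
    rw [← ZMod.val_cast_of_lt ha.1, ← ZMod.val_cast_of_lt hb.1, hab']
  · intro x hx
    simp only [Finset.mem_filter, Finset.mem_univ, true_and] at hx
    have hv : ((x.val : ℕ) : ZMod m) = x := ZMod.natCast_rightInverse x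
    refine ⟨x.val, ?_, hv⟩
    simp only [Finset.mem_filter, Finset.mem_range]
    refine ⟨ZMod.val_lt x, ?_⟩
    rw [← Nat.dvd_iff_mod_eq_zero, ← ZMod.natCast_eq_zero_iff]
    push_cast
    rw [hv]
    linear_combination hx

lemma solCard_mul (a b : ℕ) (ha : a ≠ 0) (hb : b ≠ 0) (hab : Nat.Coprime a b) :
    solCard (a * b) = solCard a * solCard b := by
  haveI : NeZero a := ⟨ha⟩
  haveI : NeZero b := ⟨hb⟩
  haveI : NeZero (a * b) := ⟨mul_ne_zero ha hb⟩
  have e := ZMod.chineseRemainder hab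
  rw [solCard, solCard, solCard, ← Nat.card_prod]
  apply Nat.card_congr
  refine (Equiv.subtypeEquiv e.toEquiv ?_).trans (Equiv.subtypeProdEquivProd)
  intro x
  have h2 : e (x ^ 4 + 2) = (e x) ^ 4 + 2 := by
    simp [map_add, map_pow, map_ofNat]
  constructor
  · intro hx
    have : e (x ^ 4 + 2) = 0 := by rw [hx]; exact map_zero _
    rw [h2, Prod.ext_iff] at this
    exact this
  · intro hx
    have : e (x ^ 4 + 2) = 0 := by rw [h2]; exact Prod.ext hx.1 hx.2
    exact e.injective (by rw [this, map_zero])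

lemma root_not_dvd {p : ℕ} (hp : p.Prime) (hodd : Odd p) {x : ℤ} (hx : (p:ℤ) ∣ x ^ 4 + 2) :
    ¬ (p:ℤ) ∣ x := by
  intro h
  have h4 : (p:ℤ) ∣ x ^ 4 := h.pow (by norm_num)
  have h2 : (p:ℤ) ∣ 2 := by
    have := dvd_sub hx h4
    simpa using this
  have hle : p ∣ 2 := by exact_mod_cast h2
  have hp2 : p = 2 := ((Nat.prime_dvd_prime_iff_eq hp Nat.prime_two).mp hle)
  rw [hp2] at hodd
  exact (Nat.not_odd_iff_even.mpr (by norm_num)) hodd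

lemma root_not_dvd_deriv {p : ℕ} (hp : p.Prime) (hodd : Odd p) {x : ℤ}
    (hx : (p:ℤ) ∣ x ^ 4 + 2) : ¬ (p:ℤ) ∣ 4 * x ^ 3 := by
  intro h
  have hpP : Prime (p:ℤ) := Nat.prime_iff_prime_int.mp hp
  rcases hpP.dvd_mul.mp h with h4 | h3
  · have h4' : p ∣ 4 := by exact_mod_cast h4
    have h2' : p ∣ 2 := by
      have : (4 : ℕ) = 2 * 2 := by norm_num
      rcases (Nat.Prime.dvd_mul hp).mp (this ▸ h4') with h | h <;> exact h
    have hp2 : p = 2 := ((Nat.prime_dvd_prime_iff_eq hp Nat.prime_two).mp h2')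
    rw [hp2] at hodd
    exact (Nat.not_odd_iff_even.mpr (by norm_num)) hodd
  · exact root_not_dvd hp hodd hx (hpP.dvd_of_dvd_pow h3)

lemma step (p : ℕ) (hp : p.Prime) (hodd : Odd p) (j : ℕ) (hj : 1 ≤ j) :
    ((Finset.range (p ^ (j+1))).filter (fun n => (n ^ 4 + 2) % (p ^ (j+1)) = 0)).card =
    ((Finset.range (p ^ j)).filter (fun n => (n ^ 4 + 2) % (p ^ j) = 0)).card := by
  haveI : Fact p.Prime := ⟨hp⟩
  have hp0 : 0 < p := hp.pos
  set q := p ^ j with hq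
  have hq0 : 0 < q := pow_pos hp0 j
  have hpq : p ∣ q := dvd_pow_self p (by omega)
  have hqq : p ^ (j+1) = q * p := by rw [hq, ← pow_succ]
  have hpqZ : (p:ℤ) ∣ (q:ℤ) := Int.natCast_dvd_natCast.mpr hpq
  have hpP : Prime (p:ℤ) := Nat.prime_iff_prime_int.mp hp
  rw [hqq]
  refine Finset.card_bij (fun n _ => n % q) ?_ ?_ ?_
  · intro n hn
    simp only [Finset.mem_filter, Finset.mem_range] at hn ⊢
    refine ⟨Nat.mod_lt n hq0, ?_⟩
    have hd : q ∣ n ^ 4 + 2 :=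
      dvd_trans (Dvd.intro p rfl) (Nat.dvd_of_mod_eq_zero hn.2)
    have hme : (n % q) ^ 4 + 2 ≡ n ^ 4 + 2 [MOD q] :=
      Nat.ModEq.add_right 2 ((Nat.mod_modEq n q).pow 4)
    calc ((n % q) ^ 4 + 2) % q = (n ^ 4 + 2) % q := hme
      _ = 0 := Nat.mod_eq_zero_of_dvd hd
  · intro a ha b hb hab
    simp only [Finset.mem_filter, Finset.mem_range] at ha hb
    have hab' : a % q = b % q := hab
    have hA : ((q:ℤ) * p) ∣ (a:ℤ) ^ 4 + 2 := by
      have := Nat.dvd_of_mod_eq_zero ha.2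
      exact_mod_cast Int.natCast_dvd_natCast.mpr this
    have hB : ((q:ℤ) * p) ∣ (b:ℤ) ^ 4 + 2 := by
      have := Nat.dvd_of_mod_eq_zero hb.2
      exact_mod_cast Int.natCast_dvd_natCast.mpr this
    obtain ⟨c, hc⟩ : (q:ℤ) ∣ (b:ℤ) - a := Nat.ModEq.dvd (show a ≡ b [MOD q] from hab')
    have hPa : (p:ℤ) ∣ (a:ℤ) ^ 4 + 2 := dvd_trans (Dvd.intro_left q rfl) hA
    have key : ((q:ℤ) * p) ∣ ((q:ℤ) * c) * ((b:ℤ)^3 + b^2*a + b*a^2 + a^3) := by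
      have h1 : ((b:ℤ) ^ 4 + 2) - ((a:ℤ) ^ 4 + 2)
          = ((q:ℤ) * c) * ((b:ℤ)^3 + b^2*a + b*a^2 + a^3) := by
        rw [← hc]; ring
      rw [← h1]
      exact dvd_sub hB hA
    have hq0' : (q:ℤ) ≠ 0 := by exact_mod_cast hq0.ne'
    have key2 : (p:ℤ) ∣ c * ((b:ℤ)^3 + b^2*a + b*a^2 + a^3) := by
      rcases key with ⟨e, he⟩
      refine ⟨e, ?_⟩
      apply mul_left_cancel₀ hq0'
      rw [← mul_assoc, ← mul_assoc]
      linarith [he]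
    have hba : (p:ℤ) ∣ (b:ℤ) - a := dvd_trans hpqZ ⟨c, hc⟩
    have hS : (p:ℤ) ∣ ((b:ℤ)^3 + b^2*a + b*a^2 + a^3) - 4*(a:ℤ)^3 := by
      rcases hba with ⟨d, hd⟩
      refine ⟨d * ((b:ℤ)^2 + 2*a*b + 3*a^2), ?_⟩
      have : (b:ℤ) = a + p * d := by linarith [hd]
      rw [this]; ring
    have hSc : ¬ (p:ℤ) ∣ ((b:ℤ)^3 + b^2*a + b*a^2 + a^3) := by
      intro h
      exact root_not_dvd_deriv hp hodd hPa (by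
        have := dvd_sub h hS
        simpa using this)
    have hpc : (p:ℤ) ∣ c := (hpP.dvd_mul.mp key2).resolve_right hSc
    have : ((q:ℤ) * p) ∣ (b:ℤ) - a := by
      rcases hpc with ⟨e, he⟩
      exact ⟨e, by rw [hc, he]; ring⟩
    have habs : |(b:ℤ) - a| < (q:ℤ) * p := by
      rw [abs_lt]
      constructor
      · have : (a:ℤ) < (q:ℤ) * p := by exact_mod_cast ha.1
        have hb0 : (0:ℤ) ≤ b := Int.natCast_nonneg b
        linarith
      · have : (b:ℤ) < (q:ℤ) * p := by exact_mod_cast hb.1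
        have ha0 : (0:ℤ) ≤ a := Int.natCast_nonneg a
        linarith
    have := Int.eq_zero_of_abs_lt_dvd this habs
    have : (a:ℤ) = b := by linarith
    exact_mod_cast this
  · intro b hbmem
    simp only [Finset.mem_filter, Finset.mem_range] at hbmem
    obtain ⟨hblt, hbmod⟩ := hbmem
    have hbdvd : q ∣ b ^ 4 + 2 := Nat.dvd_of_mod_eq_zero hbmod
    obtain ⟨c, hc⟩ := hbdvd
    have hcZ : (b:ℤ) ^ 4 + 2 = (q:ℤ) * c := by exact_mod_cast hc
    have hPb : (p:ℤ) ∣ (b:ℤ) ^ 4 + 2 := hcZ ▸ Dvd.dvd.mul_right hpqZ c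
    have hpb : ¬ (p:ℤ) ∣ (b:ℤ) := root_not_dvd hp hodd hPb
    have hAne : (4 * ((b : ZMod p))^3) ≠ 0 := by
      intro h
      apply root_not_dvd_deriv hp hodd hPb
      have : ((4 * (b:ℤ)^3 : ℤ) : ZMod p) = 0 := by push_cast; exact_mod_cast h
      exact (ZMod.intCast_zmod_eq_zero_iff_dvd _ p).mp this
    set u : ZMod p := -(c : ZMod p) * (4 * ((b : ZMod p))^3)⁻¹ with hu
    set t := u.val with ht
    have htp : t < p := ZMod.val_lt u
    have hzero : ((c:ℤ) + 4 * (b:ℤ)^3 * t : ℤ) = (q:ℤ) * 0 ∨ True := Or.inr trivial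
    have key : (p:ℤ) ∣ (c:ℤ) + 4 * (b:ℤ)^3 * (t:ℤ) := by
      rw [← ZMod.intCast_zmod_eq_zero_iff_dvd]
      push_cast
      have hval : ((t:ℕ) : ZMod p) = u := ZMod.natCast_rightInverse u
      rw [hval, hu]
      linear_combination (-(c:ZMod p)) * mul_inv_cancel₀ hAne
    refine ⟨b + t * q, ?_, ?_⟩
    · simp only [Finset.mem_filter, Finset.mem_range]
      constructor
      · have h1 : t * q ≤ (p - 1) * q := Nat.mul_le_mul_right q (by omega)
        have h2 : q + (p - 1) * q = q * p := by
          obtain ⟨k, rfl⟩ : ∃ k, p = k + 1 := ⟨p - 1, by omega⟩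
          simp only [Nat.add_sub_cancel]
          ring
        calc b + t * q < q + t * q := Nat.add_lt_add_right hblt _
          _ ≤ q + (p-1) * q := Nat.add_le_add_left h1 q
          _ = q * p := h2
      · rw [← Nat.dvd_iff_mod_eq_zero]
        have hZ : ((q:ℤ) * p) ∣ ((b + t * q : ℕ) : ℤ) ^ 4 + 2 := by
          push_cast
          have hident : ((b:ℤ) + t * q) ^ 4 + 2
              = (q:ℤ) * ((c:ℤ) + 4 * (b:ℤ)^3 * t
                  + q * (6*(b:ℤ)^2*t^2 + 4*(b:ℤ)*t^3*q + t^4*q^2)) := by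
            linear_combination hcZ
          rw [hident]
          apply mul_dvd_mul_left
          exact dvd_add key (Dvd.dvd.mul_right hpqZ _)
        have : (q * p : ℕ) ∣ (b + t * q) ^ 4 + 2 := by
          rw [← Int.natCast_dvd_natCast]
          push_cast
          push_cast at hZ
          exact hZ
        exact this
    · show (b + t * q) % q = b
      rw [Nat.add_mul_mod_self_right, Nat.mod_eq_of_lt hblt]

lemma solCard_pow (p : ℕ) (hp : p.Prime) (hodd : Odd p) (k : ℕ) (hk : 1 ≤ k) :
    solCard (p ^ k) = solCard p := by
  induction k with
  | zero => omega
  | succ n ih =>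
    rcases Nat.lt_or_ge n 1 with hn | hn
    · interval_cases n
      · simp
    · rw [← solCard_eq _ (pow_pos hp.pos _), step p hp hodd n hn,
        solCard_eq _ (pow_pos hp.pos _), ih hn]

lemma two_ne_zero_zmod (p : ℕ) (hp : p.Prime) (hp2 : p ≠ 2) : (2 : ZMod p) ≠ 0 := by
  haveI : Fact p.Prime := ⟨hp⟩
  intro h
  have : ((2 : ℕ) : ZMod p) = 0 := by exact_mod_cast h
  rw [ZMod.natCast_eq_zero_iff] at this
  exact hp2 ((Nat.prime_dvd_prime_iff_eq hp Nat.prime_two).mp this)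

lemma solCard_as_ncard (p : ℕ) :
    solCard p = Set.ncard {x : ZMod p | x ^ 4 + 2 = 0} := by
  rw [solCard, ← Nat.card_coe_set_eq]
  rfl

lemma solCard_prime_one (p : ℕ) (hp : p.Prime) (h1 : p % 8 = 1)
    (ht : ∃ t : ℕ, (t ^ 4 + 2) % p = 0) : solCard p = 4 := by
  haveI : Fact p.Prime := ⟨hp⟩
  obtain ⟨t0, ht0⟩ := ht
  have hT : ((t0 : ZMod p)) ^ 4 = -2 := by
    have h : ((t0 ^ 4 + 2 : ℕ) : ZMod p) = 0 := by
      rw [ZMod.natCast_eq_zero_iff]; exact Nat.dvd_of_mod_eq_zero ht0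
    push_cast at h
    linear_combination h
  set T := (t0 : ZMod p) with hTdef
  have hp2 : p ≠ 2 := by omega
  have h2ne : (2 : ZMod p) ≠ 0 := two_ne_zero_zmod p hp hp2
  have hTne : T ≠ 0 := by
    intro h; rw [h] at hT; apply h2ne; linear_combination hT
  obtain ⟨i, hi⟩ : IsSquare (-1 : ZMod p) :=
    (ZMod.exists_sq_eq_neg_one_iff).mpr (by omega)
  have hi2 : i * i = -1 := hi.symm
  have hi1 : i ≠ 1 := by intro h; apply h2ne; rw [h] at hi2; linear_combination hi2
  have hineg1 : i ≠ -1 := by intro h; apply h2ne; rw [h] at hi2; linear_combination hi2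
  have hi0 : i ≠ 0 := by
    intro h; rw [h] at hi2
    exact one_ne_zero (α := ZMod p) (by linear_combination hi2)
  have e1 : T ≠ -T := by
    intro h; exact mul_ne_zero h2ne hTne (by linear_combination h)
  have e2 : T ≠ i * T := by
    intro h
    rcases mul_eq_zero.mp (show (i - 1) * T = 0 by linear_combination -h) with h' | h'
    · exact hi1 (by linear_combination h')
    · exact hTne h'
  have e3 : T ≠ -(i * T) := by
    intro h
    rcases mul_eq_zero.mp (show (i + 1) * T = 0 by linear_combination h) with h' | h'
    · exact hineg1 (by linear_combination h')
    · exact hTne h'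
  have e4 : -T ≠ i * T := by
    intro h
    rcases mul_eq_zero.mp (show (i + 1) * T = 0 by linear_combination -h) with h' | h'
    · exact hineg1 (by linear_combination h')
    · exact hTne h'
  have e5 : -T ≠ -(i * T) := by
    intro h
    rcases mul_eq_zero.mp (show (i - 1) * T = 0 by linear_combination h) with h' | h'
    · exact hi1 (by linear_combination h')
    · exact hTne h'
  have e6 : i * T ≠ -(i * T) := by
    intro h
    exact mul_ne_zero (mul_ne_zero h2ne hi0) hTne (by linear_combination h)
  have hset : {x : ZMod p | x ^ 4 + 2 = 0} = {T, -T, i * T, -(i * T)} := by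
    ext x
    simp only [Set.mem_setOf_eq, Set.mem_insert_iff, Set.mem_singleton_iff]
    constructor
    · intro hx
      have hfac : (x ^ 2 - T ^ 2) * (x ^ 2 + T ^ 2) = 0 := by
        linear_combination hx - hT
      rcases mul_eq_zero.mp hfac with h | h
      · rcases mul_eq_zero.mp (show (x - T) * (x + T) = 0 by linear_combination h) with h' | h'
        · exact Or.inl (by linear_combination h')
        · exact Or.inr (Or.inl (by linear_combination h'))
      · rcases mul_eq_zero.mp
            (show (x - i * T) * (x + i * T) = 0 by linear_combination h - T ^ 2 * hi2)
          with h' | h'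
        · exact Or.inr (Or.inr (Or.inl (by linear_combination h')))
        · exact Or.inr (Or.inr (Or.inr (by linear_combination h')))
    · rintro (rfl | rfl | rfl | rfl)
      · linear_combination hT
      · linear_combination hT
      · linear_combination (T ^ 4 * (i * i - 1)) * hi2 + hT
      · linear_combination (T ^ 4 * (i * i - 1)) * hi2 + hT
  rw [solCard_as_ncard, hset]
  rw [Set.ncard_insert_of_notMem (by
      simp only [Set.mem_insert_iff, Set.mem_singleton_iff]
      push_neg
      exact ⟨e1, e2, e3⟩)]
  rw [Set.ncard_insert_of_notMem (by
      simp only [Set.mem_insert_iff, Set.mem_singleton_iff]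
      push_neg
      exact ⟨e4, e5⟩)]
  rw [Set.ncard_pair e6]

lemma solCard_prime_three (p : ℕ) (hp : p.Prime) (h3 : p % 8 = 3) : solCard p = 2 := by
  haveI : Fact p.Prime := ⟨hp⟩
  have hp2 : p ≠ 2 := by omega
  have h2ne : (2 : ZMod p) ≠ 0 := two_ne_zero_zmod p hp hp2
  obtain ⟨s, hs⟩ : IsSquare (-2 : ZMod p) :=
    (ZMod.exists_sq_eq_neg_two_iff hp2).mpr (Or.inr h3)
  have hsne : s ≠ 0 := by
    intro h; rw [h] at hs; apply h2ne; linear_combination -hs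
  have hnsq : ¬ IsSquare (-1 : ZMod p) := by
    rw [ZMod.exists_sq_eq_neg_one_iff]; omega
  have hu : ∃ u : ZMod p, u ^ 4 = -2 := by
    by_cases h : IsSquare s
    · obtain ⟨u, hu⟩ := h
      rw [hu] at hs
      exact ⟨u, by linear_combination -hs⟩
    · have hχ : quadraticChar (ZMod p) s = -1 :=
        quadraticChar_neg_one_iff_not_isSquare.mpr h
      have hχm1 : quadraticChar (ZMod p) (-1) = -1 :=
        quadraticChar_neg_one_iff_not_isSquare.mpr hnsq
      have hone : quadraticChar (ZMod p) (-s) = 1 := by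
        rw [show (-s) = (-1) * s by ring, map_mul, hχ, hχm1]; norm_num
      obtain ⟨u, hu⟩ : IsSquare (-s) :=
        (quadraticChar_one_iff_isSquare (neg_ne_zero.mpr hsne)).mp hone
      exact ⟨u, by linear_combination (s - u * u) * hu - hs⟩
  obtain ⟨u, hu4⟩ := hu
  have hune : u ≠ 0 := by
    intro h; rw [h] at hu4; apply h2ne; linear_combination hu4
  have hset : {x : ZMod p | x ^ 4 + 2 = 0} = {u, -u} := by
    ext x
    simp only [Set.mem_setOf_eq, Set.mem_insert_iff, Set.mem_singleton_iff]
    constructor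
    · intro hx
      have hfac : (x ^ 2 - u ^ 2) * (x ^ 2 + u ^ 2) = 0 := by
        linear_combination hx - hu4
      rcases mul_eq_zero.mp hfac with h | h
      · rcases mul_eq_zero.mp (show (x - u) * (x + u) = 0 by linear_combination h) with h' | h'
        · exact Or.inl (by linear_combination h')
        · exact Or.inr (by linear_combination h')
      · exfalso
        apply hnsq
        refine ⟨x * u⁻¹, ?_⟩
        have hinv : u * u⁻¹ = 1 := mul_inv_cancel₀ hune
        field_simp
        linear_combination -h
    · rintro (rfl | rfl)
      · linear_combination hu4
      · linear_combination hu4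
  rw [solCard_as_ncard, hset, Set.ncard_pair (by
    intro h; exact mul_ne_zero h2ne hune (by linear_combination h))]

lemma main_count (m : ℕ) (hodd : Odd m)
    (h : ∀ p : ℕ, p.Prime → p ∣ m →
        (p % 8 = 1 ∧ ∃ t : ℕ, (t ^ 4 + 2) % p = 0) ∨ p % 8 = 3) :
    solCard m =
      4 ^ (m.primeFactors.filter
            (fun p => p % 8 = 1 ∧ ∃ t : ℕ, (t ^ 4 + 2) % p = 0)).card *
      2 ^ (m.primeFactors.filter (fun p => p % 8 = 3)).card := by
  induction m using Nat.strong_induction_on with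
  | _ m ih =>
  have hm0 : m ≠ 0 := by rintro rfl; simp [Nat.odd_iff] at hodd
  rcases eq_or_lt_of_le (Nat.one_le_iff_ne_zero.mpr hm0) with h1 | h1
  · -- m = 1
    rw [← h1]
    have : solCard 1 = 1 := by
      rw [← solCard_eq 1 one_pos]
      decide
    rw [this]
    simp
  · -- m > 1
    set p := m.minFac with hpdef
    have hp : p.Prime := Nat.minFac_prime (by omega)
    have hpdvd : p ∣ m := Nat.minFac_dvd m
    set k := m.factorization p with hk
    have hk1 : 1 ≤ k := hp.factorization_pos_of_dvd hm0 hpdvd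
    set n := m / p ^ k with hndef
    have hmn : m = p ^ k * n := (Nat.ordProj_mul_ordCompl_eq_self m p).symm
    have hpn : ¬ p ∣ n := Nat.not_dvd_ordCompl hp hm0
    have hn0 : n ≠ 0 := by
      intro h'; rw [h', mul_zero] at hmn; exact hm0 hmn
    have hpk0 : p ^ k ≠ 0 := pow_ne_zero k hp.pos.ne'
    have hcop : Nat.Coprime (p ^ k) n :=
      Nat.Coprime.pow_left k ((Nat.Prime.coprime_iff_not_dvd hp).mpr hpn)
    have hpodd : Odd p := by
      rcases Nat.even_or_odd p with he | ho
      · exfalso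
        have : 2 ∣ m := dvd_trans he.two_dvd hpdvd
        rw [Nat.odd_iff] at hodd
        omega
      · exact ho
    have hnodd : Odd n := by
      rw [hmn] at hodd
      exact (Nat.odd_mul.mp hodd).2
    have hpk2 : 2 ≤ p ^ k := by
      calc 2 ≤ p := hp.two_le
        _ ≤ p ^ k := Nat.le_self_pow (by omega) p
    have hnlt : n < m := by
      have h2n : 2 * n ≤ p ^ k * n := Nat.mul_le_mul_right n hpk2
      omega
    have hIH := ih n hnlt hnodd (fun q hq hqd => h q hq (hqd.trans ⟨p ^ k, by rw [hmn]; ring⟩))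
    have hpf : m.primeFactors = insert p n.primeFactors := by
      rw [hmn, Nat.primeFactors_mul hpk0 hn0, Nat.primeFactors_pow p (by omega), hp.primeFactors]
      exact (Finset.insert_eq p _).symm
    have hpnot : p ∉ n.primeFactors := by
      rw [Nat.mem_primeFactors]
      push_neg
      intro _; exact fun hd => absurd hd hpn
    have hsplit : solCard m = solCard p * solCard n := by
      rw [hmn, solCard_mul _ _ hpk0 hn0 hcop, solCard_pow p hp hpodd k hk1]
    rcases h p hp hpdvd with hQ1 | hQ3
    · have hnQ3 : ¬ (p % 8 = 3) := by omega
      rw [hsplit, solCard_prime_one p hp hQ1.1 hQ1.2, hIH, hpf,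
        Finset.filter_insert, Finset.filter_insert, if_pos hQ1, if_neg hnQ3,
        Finset.card_insert_of_notMem (fun hmem => hpnot (Finset.mem_of_mem_filter _ hmem))]
      ring
    · have hnQ1 : ¬ (p % 8 = 1 ∧ ∃ t : ℕ, (t ^ 4 + 2) % p = 0) := by
        rintro ⟨h8, -⟩; omega
      rw [hsplit, solCard_prime_three p hp hQ3, hIH, hpf,
        Finset.filter_insert, Finset.filter_insert, if_neg hnQ1, if_pos hQ3,
        Finset.card_insert_of_notMem (fun hmem => hpnot (Finset.mem_of_mem_filter _ hmem))]
      ring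

open scoped Classical in
/-- For odd m > 1 each of whose prime divisors p satisfies
(p ≡ 1 (mod 8) and −2 is a fourth power mod p) or p ≡ 3 (mod 8), the
congruence n⁴ + 2 ≡ 0 (mod m) has exactly 4^{ω₀(m)}·2^{ω₁(m)} solutions in
ℤ/mℤ; if m has a prime divisor ≡ 5 or 7 (mod 8) there are no solutions. -/
theorem stmt_7 (m : ℕ) (hm : 1 < m) (hodd : Odd m) :
    ((∀ p : ℕ, p.Prime → p ∣ m →
        (p % 8 = 1 ∧ ∃ t : ℕ, (t ^ 4 + 2) % p = 0) ∨ p % 8 = 3) →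
      ((Finset.range m).filter (fun n => (n ^ 4 + 2) % m = 0)).card =
        4 ^ (m.primeFactors.filter
              (fun p => p % 8 = 1 ∧ ∃ t : ℕ, (t ^ 4 + 2) % p = 0)).card *
        2 ^ (m.primeFactors.filter (fun p => p % 8 = 3)).card) ∧
    ((∃ p : ℕ, p.Prime ∧ p ∣ m ∧ (p % 8 = 5 ∨ p % 8 = 7)) →
      ((Finset.range m).filter (fun n => (n ^ 4 + 2) % m = 0)).card = 0) := by
  constructor
  · intro h
    rw [solCard_eq m (by omega)]
    exact main_count m hodd h
  · rintro ⟨p, hp, hpdvd, hp57⟩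
    haveI : Fact p.Prime := ⟨hp⟩
    rw [Finset.card_eq_zero, Finset.filter_eq_empty_iff]
    intro n _ hmod
    have hdvd : p ∣ n ^ 4 + 2 := hpdvd.trans (Nat.dvd_of_mod_eq_zero hmod)
    have hcast : ((n ^ 4 + 2 : ℕ) : ZMod p) = 0 := by
      rw [ZMod.natCast_eq_zero_iff]; exact hdvd
    push_cast at hcast
    have hsq : IsSquare (-2 : ZMod p) :=
      ⟨(n : ZMod p) ^ 2, by linear_combination -hcast⟩
    have := (ZMod.exists_sq_eq_neg_two_iff (by omega : p ≠ 2)).mp hsq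
    omega
end

section
/- Let p be a prime with p ≡ 1 (mod 4), written as p = a² + b² with a odd and b even. Then 2 is a fourth power modulo p if and only if b ≡ 0 (mod 8). Equivalently, 2^{(p−1)/4} ≡ (−1)^{b/4} (mod p) when p ≡ 1 (mod 8). -/
open ZMod

lemma my_exists_pow_four {G : Type*} [CommGroup G] [Fintype G] [IsCyclic G] {x : G}
    {k : ℕ} (hcard : Fintype.card G = 4 * k) (hx : x ^ k = 1) : ∃ y, y ^ 4 = x := by
  obtain ⟨g, hg⟩ := IsCyclic.exists_generator (α := G)
  obtain ⟨n, hn⟩ := (Submonoid.mem_powers_iff x g).mp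
    (mem_powers_iff_mem_zpowers.mpr (hg x))
  have hk0 : k ≠ 0 := by
    rintro rfl; have : 0 < Fintype.card G := Fintype.card_pos; omega
  have hgord : orderOf g = 4 * k := by
    rw [orderOf_eq_card_of_forall_mem_zpowers hg, Nat.card_eq_fintype_card, hcard]
  have h1 : g ^ (n * k) = 1 := by rw [pow_mul, hn, hx]
  have h2 : 4 * k ∣ n * k := hgord ▸ orderOf_dvd_of_pow_eq_one h1
  obtain ⟨d, hd⟩ := h2
  have h4 : n = 4 * d := Nat.eq_of_mul_eq_mul_right (Nat.pos_of_ne_zero hk0)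
      (show n * k = (4 * d) * k by rw [hd]; ring)
  exact ⟨g ^ d, by rw [← pow_mul, mul_comm d 4, ← h4, hn]⟩

lemma my_int_gcd_add (a b : ℤ) : Int.gcd a (a+b) = Int.gcd a b := by
  apply Nat.dvd_antisymm
  · rw [← Int.natCast_dvd_natCast]
    refine Int.dvd_coe_gcd (Int.gcd_dvd_left _ _) ?_
    have h1 : (Int.gcd a (a+b) : ℤ) ∣ (a + b) - a := dvd_sub (Int.gcd_dvd_right _ _) (Int.gcd_dvd_left _ _)
    simpa using h1
  · rw [← Int.natCast_dvd_natCast]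
    exact Int.dvd_coe_gcd (Int.gcd_dvd_left _ _) (dvd_add (Int.gcd_dvd_left _ _) (Int.gcd_dvd_right _ _))

lemma my_gcd_natAbs_comm (a b : ℤ) : Int.gcd b ((a.natAbs : ℕ) : ℤ) = Int.gcd a b := by
  unfold Int.gcd; rw [Int.natAbs_natCast]; exact Nat.gcd_comm _ _

lemma my_flip (p : ℕ) [Fact p.Prime] (hp4 : p % 4 = 1) (x : ℤ) (hx : Odd x) :
    legendreSym p x = jacobiSym (p : ℤ) x.natAbs := by
  have hodd : Odd p := Nat.odd_iff.mpr (by omega)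
  have h1 : jacobiSym x p = jacobiSym ((x.natAbs : ℕ) : ℤ) p := by
    rcases Int.natAbs_eq x with h | h
    · rw [← h]
    · conv_lhs => rw [h]
      rw [jacobiSym.neg _ hodd, ZMod.χ₄_nat_one_mod_four hp4, one_mul]
  rw [jacobiSym.legendreSym.to_jacobiSym, h1,
    jacobiSym.quadratic_reciprocity_one_mod_four' (Int.natAbs_odd.mpr hx) hp4]

/-- For a prime p ≡ 1 (mod 4) written as p = a² + b² with a odd and b even,
2 is a fourth power mod p iff 8 ∣ b; equivalently, when p ≡ 1 (mod 8),
2^{(p−1)/4} ≡ (−1)^{b/4} (mod p). -/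
theorem stmt_17 (p : ℕ) (hp : p.Prime) (hp4 : p % 4 = 1) (a b : ℤ)
    (hab : (p : ℤ) = a ^ 2 + b ^ 2) (ha : Odd a) (hb : Even b) :
    ((∃ t : ZMod p, t ^ 4 = 2) ↔ (8 : ℤ) ∣ b) ∧
    (p % 8 = 1 →
      (2 : ZMod p) ^ ((p - 1) / 4) = (-1 : ZMod p) ^ (b / 4).natAbs) := by
  haveI fp : Fact p.Prime := ⟨hp⟩
  have hple := hp.two_le
  have hp2 : p ≠ 2 := by rintro rfl; omega
  have hp5 : 5 ≤ p := by omega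
  obtain ⟨m, hm⟩ := id ha
  obtain ⟨e, he⟩ := Int.even_mul_succ_self m
  have he' : m^2 + m = 2*e := by linear_combination he
  have h2ne : (2 : ZMod p) ≠ 0 := by
    intro h2
    have h3 : ((2:ℕ) : ZMod p) = 0 := by exact_mod_cast h2
    exact hp2 (((Nat.prime_dvd_prime_iff_eq (Fact.out) Nat.prime_two).mp
      ((ZMod.natCast_eq_zero_iff 2 p).mp h3)))
  have hb0 : b ≠ 0 := by
    rintro rfl
    have h1 : ((a.natAbs : ℕ) : ℤ)^2 = (p:ℤ) := by
      rw [hab]; push_cast [sq_abs]; ring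
    have h2 : a.natAbs^2 = p := by exact_mod_cast h1
    rcases hp.eq_one_or_self_of_dvd a.natAbs ⟨a.natAbs, by rw [← h2]; ring⟩ with h | h
    · rw [h] at h2; simp at h2; omega
    · rw [h] at h2; nlinarith
  have hgcd : Int.gcd a b = 1 := by
    have hgp : ((Int.gcd a b : ℕ):ℤ)^2 ∣ (p:ℤ) := by
      rw [hab]
      exact dvd_add (pow_dvd_pow_of_dvd (Int.gcd_dvd_left _ _) 2)
        (pow_dvd_pow_of_dvd (Int.gcd_dvd_right _ _) 2)
    have hgp' : (Int.gcd a b)^2 ∣ p := by exact_mod_cast hgp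
    rcases hp.eq_one_or_self_of_dvd _ hgp' with h | h
    · rw [pow_two] at h; exact Nat.dvd_one.mp ⟨_, h.symm⟩
    · exfalso
      rcases hp.eq_one_or_self_of_dvd (Int.gcd a b) ⟨Int.gcd a b, by rw [← h]; ring⟩ with h' | h'
      · rw [h'] at h; simp at h; omega
      · rw [h'] at h; nlinarith
  -- casts nonzero
  have hcast_ne : ∀ x : ℤ, x ≠ 0 → x^2 + (p:ℤ) ≤ ((p:ℤ))^2 → True := fun _ _ _ => trivial
  have hAa : ((a : ZMod p)) ≠ 0 := by
    intro h
    obtain ⟨x, hx⟩ := (ZMod.intCast_zmod_eq_zero_iff_dvd a p).mp h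
    have hx0 : x ≠ 0 := by rintro rfl; simp at hx; omega
    have h1 : 1 ≤ |x| := Int.one_le_abs hx0
    have hp1 : (1:ℤ) < (p:ℤ) := by exact_mod_cast hp.one_lt
    have hx2 : 1 ≤ x^2 := by nlinarith [sq_abs x]
    have ha2 : a^2 = ((p:ℤ))^2 * x^2 := by rw [hx]; ring
    nlinarith [sq_nonneg b]
  have hBb : ((b : ZMod p)) ≠ 0 := by
    intro h
    obtain ⟨x, hx⟩ := (ZMod.intCast_zmod_eq_zero_iff_dvd b p).mp h
    have hx0 : x ≠ 0 := by rintro rfl; simp at hx; omega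
    have h1 : 1 ≤ |x| := Int.one_le_abs hx0
    have hp1 : (1:ℤ) < (p:ℤ) := by exact_mod_cast hp.one_lt
    have hx2 : 1 ≤ x^2 := by nlinarith [sq_abs x]
    have hb2 : b^2 = ((p:ℤ))^2 * x^2 := by rw [hx]; ring
    nlinarith [sq_nonneg a]
  have hsum : (a:ZMod p)^2 + (b:ZMod p)^2 = 0 := by
    have h := congrArg (fun z : ℤ => (z : ZMod p)) hab
    push_cast at h
    simpa using h.symm
  have hABne : ((a:ZMod p) + (b:ZMod p)) ≠ 0 := by
    intro h
    have hbb : (2 : ZMod p) * (b:ZMod p)^2 = 0 := by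
      linear_combination hsum + ((b:ZMod p) - (a:ZMod p))*h
    rcases mul_eq_zero.mp hbb with h' | h'
    · exact h2ne h'
    · exact hBb (pow_eq_zero_iff (by norm_num) |>.mp h')
  have habne : ((a + b : ℤ) : ZMod p) ≠ 0 := by push_cast; exact hABne
  -- Legendre symbol of 2ab is 1
  have hmod2ab : (2*a*b) % (p:ℤ) = ((a+b)^2) % (p:ℤ) :=
    Int.modEq_iff_dvd.mpr ⟨1, by linear_combination - hab⟩
  have hL2ab : legendreSym p (2*a*b) = 1 := by
    rw [legendreSym.mod p (2*a*b), hmod2ab, ← legendreSym.mod p ((a+b)^2)]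
    exact legendreSym.sq_one' p habne
  -- Legendre symbol of a is 1
  have hLa : legendreSym p a = 1 := by
    rw [my_flip p hp4 a ha]
    obtain ⟨y, hy⟩ : ((a.natAbs : ℕ) : ℤ) ∣ a := Int.natAbs_dvd.mpr dvd_rfl
    have hmoda : ((p:ℤ)) % ((a.natAbs : ℕ):ℤ) = (b^2) % ((a.natAbs : ℕ):ℤ) :=
      Int.modEq_iff_dvd.mpr ⟨-(y*a), by linear_combination - hab - a*hy⟩
    rw [jacobiSym.mod_left' hmoda]
    exact jacobiSym.sq_one' (by rw [my_gcd_natAbs_comm]; exact hgcd)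
  -- p % 8 cases
  have hp81 : p % 8 = 1 ∨ p % 8 = 5 := by omega
  rcases hp81 with hp8 | hp8
  · -- p ≡ 1 (mod 8)
    obtain ⟨k, hk⟩ : ∃ k, p = 8*k+1 := ⟨p/8, by omega⟩
    have hpk : (p:ℤ) = 8*(k:ℤ)+1 := by rw [hk]; push_cast; ring
    -- Legendre symbol of b is 1
    have hLb : legendreSym p b = 1 := by
      have h2 : legendreSym p 2 = 1 := by
        rw [legendreSym.at_two hp2, ZMod.χ₈_nat_eq_if_mod_eight]
        rw [if_neg (by omega), if_pos (by omega)]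
      have h := hL2ab
      rw [legendreSym.mul, legendreSym.mul, h2, hLa, one_mul, one_mul] at h
      exact h
    -- 4 divides b
    obtain ⟨w0, hw0⟩ := id hb
    have hb4 : (4:ℤ) ∣ b := by
      rcases Int.even_or_odd w0 with hw | hw
      · obtain ⟨v, hv⟩ := hw; exact ⟨v, by omega⟩
      · exfalso
        obtain ⟨v, hv⟩ := hw
        have hcalc : (p:ℤ) = 8*(e + 2*v^2 + 2*v) + 5 := by
          linear_combination hab + (a+2*m+1)*hm + 4*he + (b+2*w0)*hw0 + 4*(w0+2*v+1)*hv
        obtain ⟨E, hE⟩ : ∃ E:ℤ, (p:ℤ) = 8*E+5 := ⟨_, hcalc⟩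
        omega
    obtain ⟨c', hc'⟩ := hb4
    have hbdiv : b / 4 = c' := by rw [hc']; exact Int.mul_ediv_cancel_left _ (by norm_num)
    -- Legendre symbol of (a+b)
    have hsodd : Odd (a + b) := ha.add_even hb
    have hLs : legendreSym p (a+b) = jacobiSym 2 ((a+b).natAbs) := by
      rw [my_flip p hp4 _ hsodd]
      obtain ⟨y, hy⟩ : (((a+b).natAbs : ℕ) : ℤ) ∣ (a+b) := Int.natAbs_dvd.mpr dvd_rfl
      have hmods : ((p:ℤ)) % (((a+b).natAbs : ℕ):ℤ) = (2*a^2) % (((a+b).natAbs : ℕ):ℤ) :=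
        Int.modEq_iff_dvd.mpr ⟨(a-b)*y, by linear_combination (a-b)*hy - hab⟩
      rw [jacobiSym.mod_left' hmods, show (2*a^2 : ℤ) = 2 * a^2 from rfl,
        jacobiSym.mul_left]
      have hg1 : Int.gcd a (((a+b).natAbs : ℕ) : ℤ) = 1 := by
        unfold Int.gcd
        rw [Int.natAbs_natCast]
        have : Int.gcd a (a+b) = 1 := by rw [my_int_gcd_add]; exact hgcd
        exact this
      rw [jacobiSym.sq_one' hg1, mul_one]
    have hJ2s : jacobiSym 2 ((a+b).natAbs) = χ₈ ((a+b).natAbs) :=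
      jacobiSym.at_two (Int.natAbs_odd.mpr hsodd)
    -- the sign computation
    have hT : (k:ℤ) = e + 2*c'^2 := by
      have h8 : 8*(k:ℤ) = 4*m^2+4*m+16*c'^2 := by
        linear_combination hab - hpk + (a+2*m+1)*hm + (b+4*c')*hc'
      linarith [he']
    have hr0 : 0 ≤ m % 4 := Int.emod_nonneg m (by norm_num)
    have hr4 : m % 4 < 4 := Int.emod_lt_of_pos m (by norm_num)
    have ht0 : 0 ≤ c' % 2 := Int.emod_nonneg c' (by norm_num)
    have ht2 : c' % 2 < 2 := Int.emod_lt_of_pos c' (by norm_num)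
    set r := m % 4 with hrdef
    set t := c' % 2 with htdef
    obtain ⟨q, hm4⟩ : ∃ q, m = 4*q + r := ⟨m/4, by omega⟩
    obtain ⟨w, hc2⟩ : ∃ w, c' = 2*w + t := ⟨c'/2, by omega⟩
    have hEe : 2*e = 16*q^2+8*q*r+4*q + r^2+r := by
      linear_combination - he' + (m+4*q+r+1)*hm4
    -- cast of s into ZMod 8
    have hab8 : ((a + b : ℤ) : ZMod 8) = ((2*r+4*t+1 : ℤ) : ZMod 8) := by
      have hmod : (a+b) % (8:ℤ) = (2*r+4*t+1) % 8 :=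
        Int.modEq_iff_dvd.mpr ⟨-(q+w), by
          linear_combination - hm - 2*hm4 - hc' - 4*hc2⟩
      exact_mod_cast (ZMod.intCast_eq_intCast_iff _ _ _).mpr hmod
    have hs8 : (((a+b).natAbs : ℕ) : ZMod 8) = ((2*r + 4*t + 1 : ℤ) : ZMod 8) ∨
        (((a+b).natAbs : ℕ) : ZMod 8) = -((2*r + 4*t + 1 : ℤ) : ZMod 8) := by
      have hcast : (((a+b).natAbs : ℕ) : ZMod 8) = ((((a+b).natAbs : ℕ):ℤ) : ZMod 8) :=
        (Int.cast_natCast _).symm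
      rcases Int.natAbs_eq (a+b) with h | h
      · left; rw [hcast, ← h, hab8]
      · right
        have h2 : (((a+b).natAbs : ℕ):ℤ) = -(a+b) := by omega
        rw [hcast, h2, Int.cast_neg, hab8]
    have hχeven : ∀ y : ZMod 8, χ₈ (-y) = χ₈ y := by decide
    have hχs : (χ₈ (((a+b).natAbs : ℕ) : ZMod 8) : ℤ) = χ₈ (((2*r+4*t+1 : ℤ) : ZMod 8)) := by
      rcases hs8 with h | h
      · rw [h]
      · rw [h, hχeven]
    set c := (b/4).natAbs with hcdef
    have hcd : (c:ℤ) = c' ∨ (c:ℤ) = -c' := by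
      rw [hcdef, hbdiv]
      rcases Int.natAbs_eq c' with h | h
      · left; omega
      · right; omega
    have hsgn : (χ₈ (((a+b).natAbs : ℕ) : ZMod 8) : ℤ) = (-1:ℤ)^(k + c) := by
      rw [hχs]
      have hkc : ((-1:ℤ))^(k+c) = (if (k+c) % 2 = 0 then (1:ℤ) else -1) := by
        rcases Nat.even_or_odd (k+c) with h | h
        · rw [h.neg_one_pow, if_pos (Nat.even_iff.mp h)]
        · rw [h.neg_one_pow, if_neg (by rw [Nat.odd_iff.mp h]; norm_num)]
      rw [hkc]
      obtain ⟨Q, hQ⟩ : ∃ Q, q^2 = Q := ⟨_, rfl⟩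
      obtain ⟨C, hC⟩ : ∃ C, c'^2 = C := ⟨_, rfl⟩
      rw [hQ] at hEe
      rw [hC] at hT
      interval_cases r <;> interval_cases t <;>
        rcases hcd with hcc | hcc <;>
        first
        | (have hpar : (k+c) % 2 = 0 := by omega
           rw [hpar, ZMod.χ₈_int_eq_if_mod_eight]; norm_num)
        | (have hpar : (k+c) % 2 = 1 := by omega
           rw [hpar, ZMod.χ₈_int_eq_if_mod_eight]; norm_num)
    -- assemble everything in ZMod p
    have hB4k : ((b:ZMod p))^(4*k) = 1 := by
      have h := legendreSym.eq_pow p b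
      rw [hLb, show p/2 = 4*k by omega] at h
      simpa using h.symm
    have hAB4k : ((a:ZMod p) + (b:ZMod p))^(4*k) = ((-1:ZMod p))^(k+c) := by
      have h := legendreSym.eq_pow p (a+b)
      rw [hLs, hJ2s, hsgn, show p/2 = 4*k by omega] at h
      have hcast2 : (((a+b : ℤ)) : ZMod p) = (a:ZMod p) + (b:ZMod p) := by push_cast; rfl
      rw [hcast2] at h
      rw [← h]; push_cast; ring
    have e1 : ((a:ZMod p)+(b:ZMod p))^2 = 2*((a:ZMod p)*(b:ZMod p)) := by
      linear_combination hsum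
    have e2 : ((a:ZMod p)*(b:ZMod p))^2 = (-1) * ((b:ZMod p))^4 := by
      linear_combination ((b:ZMod p))^2 * hsum
    have key1 : ((a:ZMod p)+(b:ZMod p))^(4*k)
        = 2^(2*k) * ((-1:ZMod p)^k * ((b:ZMod p))^(4*k)) := by
      have h1 : ((a:ZMod p)+(b:ZMod p))^(4*k) = (((a:ZMod p)+(b:ZMod p))^2)^(2*k) := by
        rw [← pow_mul]; congr 1; ring
      have h2 : (((a:ZMod p)*(b:ZMod p)))^(2*k) = ((((a:ZMod p)*(b:ZMod p)))^2)^k := by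
        rw [← pow_mul]
      have h3 : ((-1:ZMod p) * ((b:ZMod p))^4)^k = (-1:ZMod p)^k * ((b:ZMod p))^(4*k) := by
        rw [mul_pow, ← pow_mul]
      rw [h1, e1, mul_pow, h2, e2, h3]
    have hmain : (2:ZMod p)^(2*k) = (-1:ZMod p)^c := by
      have hne : ((-1:ZMod p))^k ≠ 0 := pow_ne_zero _ (neg_ne_zero.mpr one_ne_zero)
      apply mul_left_cancel₀ hne
      have h2' : (-1:ZMod p)^(k+c) = 2^(2*k) * (-1:ZMod p)^k := by
        rw [← hAB4k, key1, hB4k, mul_one]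
      rw [← pow_add, h2']; ring
    have hne1 : (-1 : ZMod p) ≠ 1 := by
      haveI : Fact (2 < p) := ⟨by omega⟩; exact ZMod.neg_one_ne_one
    constructor
    · constructor
      · rintro ⟨t0, ht0⟩
        have htne : t0 ≠ 0 := by
          rintro rfl; rw [show ((0:ZMod p))^4 = 0 by ring] at ht0; exact h2ne ht0.symm
        have h1 : (2:ZMod p)^(2*k) = 1 := by
          rw [← ht0, ← pow_mul, show 4*(2*k) = p - 1 by omega,
            ZMod.pow_card_sub_one_eq_one htne]
        rw [hmain] at h1
        have hcev : Even c := (neg_one_pow_eq_one_iff_even hne1).mp h1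
        rw [hcdef, hbdiv] at hcev
        obtain ⟨d, hd⟩ := Int.natAbs_even.mp hcev
        exact ⟨d, by omega⟩
      · intro hdvd
        obtain ⟨d, hd⟩ := hdvd
        have hcev : Even c := by
          rw [hcdef, hbdiv]
          exact Int.natAbs_even.mpr ⟨d, by omega⟩
        have h1 : (2:ZMod p)^(2*k) = 1 := by rw [hmain, hcev.neg_one_pow]
        have hu : ∃ y : (ZMod p)ˣ, y ^ 4 = Units.mk0 (2:ZMod p) h2ne := by
          apply my_exists_pow_four (k := 2*k)
          · rw [ZMod.card_units p]; omega
          · exact Units.ext (by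
              rw [Units.val_pow_eq_pow_val, Units.val_mk0, h1, Units.val_one])
        obtain ⟨y, hy⟩ := hu
        refine ⟨(y : ZMod p), ?_⟩
        rw [← Units.val_pow_eq_pow_val, hy, Units.val_mk0]
    · intro _
      rw [show (p-1)/4 = 2*k by omega]
      exact hmain
  · -- p ≡ 5 (mod 8)
    have h2notsq : ¬ IsSquare (2 : ZMod p) := by
      rw [ZMod.exists_sq_eq_two_iff hp2]; omega
    refine ⟨⟨?_, ?_⟩, ?_⟩
    · rintro ⟨t, ht⟩
      exact absurd ⟨t^2, by rw [← ht]; ring⟩ h2notsq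
    · intro hdvd
      obtain ⟨d, hd⟩ := hdvd
      exfalso
      have hcalc : (p:ℤ) = 8*(e + 8*d^2) + 1 := by
        linear_combination hab + (a+2*m+1)*hm + 4*he + (b+8*d)*hd
      obtain ⟨E, hE⟩ : ∃ E:ℤ, (p:ℤ) = 8*E+1 := ⟨_, hcalc⟩
      omega
    · intro h1; omega
end
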